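/- Let Δ_c be the graph Laplacian of a locally finite simple graph with conductance function c, regarded as a densely defined operator (LinearPMap) on the Hilbert space ℓ²(V) of square-summable complex functions on V, with domain the finitely supported functions. Then for every v in the domain of the adjoint operator Δ_c*, the adjoint acts by the same difference expression: for all x ∈ V, (Δ_c* v)(x) = Σ_{y adjacent to x} c x y · (v(x) − v(y)). -/

import Mathlib

open scoped BigOperators ComplexConjugate

/-- The adjoint of the graph Laplacian (as a densely defined operator on `ℓ²(V)` with domain
the finitely supported functions) acts by the same difference expression. -/
theorem graphLaplacian_adjoint_apply {V : Type*} (G : SimpleGraph V) [DecidableRel G.Adj]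
    [G.LocallyFinite] (c : V → V → ℝ)
    (hsymm : ∀ x y, c x y = c y x)
    (hpos : ∀ x y, G.Adj x y → 0 < c x y)
    (hzero : ∀ x y, ¬ G.Adj x y → c x y = 0)
    (T : lp (fun _ : V => ℂ) 2 →ₗ.[ℂ] lp (fun _ : V => ℂ) 2)
    (hdom : ∀ f : lp (fun _ : V => ℂ) 2, f ∈ T.domain ↔ (Function.support (⇑f)).Finite)
    (haction : ∀ u : T.domain, ∀ x : V,
      (T u : lp (fun _ : V => ℂ) 2) x
        = ∑ y ∈ G.neighborFinset x, (c x y : ℂ) * ((u : lp (fun _ : V => ℂ) 2) x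
            - (u : lp (fun _ : V => ℂ) 2) y)) :
    ∀ v : T.adjoint.domain, ∀ x : V,
      (T.adjoint v : lp (fun _ : V => ℂ) 2) x
        = ∑ y ∈ G.neighborFinset x, (c x y : ℂ) * ((v : lp (fun _ : V => ℂ) 2) x
            - (v : lp (fun _ : V => ℂ) 2) y) := by
  classical
  -- density of the domain
  have hT : Dense (T.domain : Set (lp (fun _ : V => ℂ) 2)) := by
    intro f
    have hsum := lp.hasSum_single (E := fun _ : V => ℂ) ENNReal.ofNat_ne_top f
    refine mem_closure_of_tendsto hsum (Filter.Eventually.of_forall fun s => ?_)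
    refine (hdom _).2 ?_
    refine s.finite_toSet.subset ?_
    intro j hj
    by_contra hjs
    apply hj
    simp only [lp.coeFn_sum, Finset.sum_apply]
    refine Finset.sum_eq_zero fun i hi => ?_
    exact lp.single_apply_ne 2 i _ (fun h => hjs (h ▸ hi))
  intro v x
  set u : lp (fun _ : V => ℂ) 2 := lp.single 2 x (1 : ℂ) with hu_def
  have hu : u ∈ T.domain := by
    refine (hdom _).2 ((Set.finite_singleton x).subset ?_)
    intro j hj
    by_contra hjx
    exact hj (lp.single_apply_ne 2 x _ hjx)
  set U : T.domain := ⟨u, hu⟩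
  -- key identity
  have key : (T.adjoint v : lp (fun _ : V => ℂ) 2) x = inner ℂ ((T U : lp (fun _ : V => ℂ) 2)) (v : lp (fun _ : V => ℂ) 2) := by
    have h1 : inner ℂ u (T.adjoint v : lp (fun _ : V => ℂ) 2)
        = (inner ℂ (1 : ℂ) ((T.adjoint v : lp (fun _ : V => ℂ) 2) x) : ℂ) :=
      by rw [hu_def]; exact lp.inner_single_left (𝕜 := ℂ) (G := fun _ : V => ℂ) x (1 : ℂ) _
    have h2 : (inner ℂ ((T.adjoint v : lp (fun _ : V => ℂ) 2)) u : ℂ)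
        = inner ℂ (v : lp (fun _ : V => ℂ) 2) ((T U : lp (fun _ : V => ℂ) 2)) :=
      (T.adjoint_isFormalAdjoint hT) v U
    calc (T.adjoint v : lp (fun _ : V => ℂ) 2) x
        = inner ℂ u (T.adjoint v : lp (fun _ : V => ℂ) 2) := by
          rw [h1]; simp [RCLike.inner_apply]
      _ = conj (inner ℂ ((T.adjoint v : lp (fun _ : V => ℂ) 2)) u : ℂ) := (inner_conj_symm _ _).symm
      _ = conj (inner ℂ (v : lp (fun _ : V => ℂ) 2) ((T U : lp (fun _ : V => ℂ) 2))) := by rw [h2]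
      _ = inner ℂ ((T U : lp (fun _ : V => ℂ) 2)) (v : lp (fun _ : V => ℂ) 2) := inner_conj_symm _ _
  -- values of T U
  have hux : u x = 1 := by rw [hu_def]; exact lp.single_apply_self (E := fun _ : V => ℂ) 2 x (1 : ℂ)
  have huy : ∀ y, y ≠ x → u y = 0 := fun y hy => by rw [hu_def]; exact lp.single_apply_ne (E := fun _ : V => ℂ) 2 x _ hy
  have hTUx : (T U : lp (fun _ : V => ℂ) 2) x = ∑ z ∈ G.neighborFinset x, (c x z : ℂ) := by
    rw [haction U x]
    refine Finset.sum_congr rfl fun z hz => ?_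
    have hzx : z ≠ x := (G.ne_of_adj ((G.mem_neighborFinset _ _).1 hz).symm)
    rw [hux, huy z hzx, sub_zero, mul_one]
  have hTUadj : ∀ y ∈ G.neighborFinset x, (T U : lp (fun _ : V => ℂ) 2) y = -(c y x : ℂ) := by
    intro y hy
    have hadj : G.Adj x y := (G.mem_neighborFinset _ _).1 hy
    have hyx : y ≠ x := G.ne_of_adj hadj.symm
    rw [haction U y]
    rw [Finset.sum_eq_single_of_mem x ((G.mem_neighborFinset _ _).2 hadj.symm)]
    · rw [huy y hyx, hux]; ring
    · intro z hz hzx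
      rw [huy y hyx, huy z hzx, sub_zero, mul_zero]
  have hTU0 : ∀ y, y ∉ insert x (G.neighborFinset x) → (T U : lp (fun _ : V => ℂ) 2) y = 0 := by
    intro y hy
    have hyx : y ≠ x := by rintro rfl; exact hy (Finset.mem_insert_self _ _)
    rw [haction U y]
    refine Finset.sum_eq_zero fun z hz => ?_
    have hzx : z ≠ x := by
      rintro rfl
      exact hy (Finset.mem_insert_of_mem ((G.mem_neighborFinset _ _).2 ((G.mem_neighborFinset _ _).1 hz).symm))
    rw [huy y hyx, huy z hzx, sub_zero, mul_zero]
  -- compute the inner product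
  rw [key]
  have hinner : inner ℂ ((T U : lp (fun _ : V => ℂ) 2)) (v : lp (fun _ : V => ℂ) 2)
      = ∑ y ∈ insert x (G.neighborFinset x),
          conj ((T U : lp (fun _ : V => ℂ) 2) y) * (v : lp (fun _ : V => ℂ) 2) y := by
    rw [← (lp.hasSum_inner (𝕜 := ℂ) ((T U : lp (fun _ : V => ℂ) 2)) (v : lp (fun _ : V => ℂ) 2)).tsum_eq]
    rw [tsum_eq_sum (s := insert x (G.neighborFinset x))]
    · exact Finset.sum_congr rfl fun y _ => by rw [RCLike.inner_apply]; exact mul_comm _ _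
    · intro y hy
      rw [RCLike.inner_apply, hTU0 y hy, map_zero, mul_zero]
  rw [hinner, Finset.sum_insert (fun h => G.irrefl ((G.mem_neighborFinset _ _).1 h))]
  rw [hTUx]
  have hrest : ∀ y ∈ G.neighborFinset x,
      conj ((T U : lp (fun _ : V => ℂ) 2) y) * (v : lp (fun _ : V => ℂ) 2) y
        = -((c x y : ℂ) * (v : lp (fun _ : V => ℂ) 2) y) := by
    intro y hy
    rw [hTUadj y hy, map_neg, Complex.conj_ofReal, hsymm y x]
    ring
  rw [Finset.sum_congr rfl hrest]
  have hconj : conj (∑ z ∈ G.neighborFinset x, (c x z : ℂ)) = ∑ z ∈ G.neighborFinset x, (c x z : ℂ) := by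
    rw [map_sum]; exact Finset.sum_congr rfl fun z _ => Complex.conj_ofReal _
  rw [hconj, Finset.sum_mul]
  rw [← Finset.sum_add_distrib]
  exact Finset.sum_congr rfl fun y _ => by ring
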